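/- arXiv:1401.4717 — 4 statements merged into one kernel-verified Lean document; each statement's English description precedes it below -/
import Mathlib

section
/- Let G be a finite group acting freely on a finite vertex set V, and let E' ⊆ E be two G-stable edge sets on V such that (V, E') is connected. Then Fl(V, E) ≅ Fl(V, E') ⊕ (ℤG)^m as G-lattices, where m = (|E| - |E'|)/|G|, and the isomorphism restricted to Fl(V, E') is the natural inclusion. -/
structure DiGraph (V E : Type*) where
  src : E → V
  tgt : E → V

noncomputable def DiGraph.boundary {V E : Type*} [Fintype E] [DecidableEq V]
    (X : DiGraph V E) : (E → ℤ) →ₗ[ℤ] (V → ℤ) where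
  toFun f := fun v =>
    ∑ e, f e * ((if X.tgt e = v then 1 else 0) - (if X.src e = v then 1 else 0))
  map_add' f g := by
    funext v
    simp [add_mul, Finset.sum_add_distrib]
  map_smul' c f := by
    funext v
    simp [Finset.mul_sum, mul_assoc]

/-- The shift of a function on edges by a permutation: `(π • f) e = f (π⁻¹ e)`. -/
def eshift {E : Type*} (π : Equiv.Perm E) (f : E → ℤ) : E → ℤ := fun e => f (π⁻¹ e)

theorem eshift_flow_mem {V E : Type*} [Fintype E] [DecidableEq V] (X : DiGraph V E)
    {G : Type*} [Group G] (actV : G →* Equiv.Perm V) (actE : G →* Equiv.Perm E)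
    (hsrc : ∀ g e, X.src (actE g e) = actV g (X.src e))
    (htgt : ∀ g e, X.tgt (actE g e) = actV g (X.tgt e))
    (g : G) {f : E → ℤ} (hf : f ∈ LinearMap.ker X.boundary) :
    eshift (actE g) f ∈ LinearMap.ker X.boundary := by
  rw [LinearMap.mem_ker] at hf ⊢
  funext v
  have h0 : X.boundary f ((actV g)⁻¹ v) = 0 := by rw [hf]; rfl
  simp only [DiGraph.boundary, LinearMap.coe_mk, AddHom.coe_mk, eshift, Pi.zero_apply] at h0 ⊢
  rw [← Equiv.sum_comp (actE g) (fun e => f ((actE g)⁻¹ e) *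
      ((if X.tgt e = v then 1 else 0) - (if X.src e = v then 1 else 0)))]
  refine Eq.trans (Finset.sum_congr rfl ?_) h0
  intro e _
  simp only [show ∀ x, (actE g)⁻¹ (actE g x) = x from fun x => Equiv.Perm.inv_eq_iff_eq.2 rfl, htgt, hsrc]
  congr 2
  · by_cases h : X.tgt e = (actV g)⁻¹ v
    · simp [h]
    · have h2 : actV g (X.tgt e) ≠ v := fun hc => h (by rw [← hc]; simp)
      simpa [h2] using h
  · by_cases h : X.src e = (actV g)⁻¹ v
    · simp [h]
    · have h2 : actV g (X.src e) ≠ v := fun hc => h (by rw [← hc]; simp)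
      simpa [h2] using h

/-- The `G`-lattice structure on the flow lattice induced by a graph action. -/
noncomputable def flowRep {V E : Type*} [Fintype E] [DecidableEq V] (X : DiGraph V E)
    {G : Type*} [Group G] (actV : G →* Equiv.Perm V) (actE : G →* Equiv.Perm E)
    (hsrc : ∀ g e, X.src (actE g e) = actV g (X.src e))
    (htgt : ∀ g e, X.tgt (actE g e) = actV g (X.tgt e)) :
    G →* Multiplicative (AddAut ↥(LinearMap.ker X.boundary)) where
  toFun g := Multiplicative.ofAdd
    { toFun := fun f => ⟨eshift (actE g) f, eshift_flow_mem X actV actE hsrc htgt g f.2⟩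
      invFun := fun f => ⟨eshift (actE g⁻¹) f, eshift_flow_mem X actV actE hsrc htgt g⁻¹ f.2⟩
      left_inv := by
        intro f; ext e
        simp [eshift]
      right_inv := by
        intro f; ext e
        simp [eshift]
      map_add' := by
        intro a b; ext e
        simp [eshift] }
  map_one' := by
    ext f e
    simp [eshift]
  map_mul' := by
    intro g h
    ext f e
    simp [eshift, mul_inv_rev]
/-- Connectedness of the underlying undirected graph. -/
def DiGraph.Conn {V E : Type*} (X : DiGraph V E) : Prop :=
  (SimpleGraph.fromRel fun u w => ∃ e, X.src e = u ∧ X.tgt e = w).Connected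


section Aux

variable {V E E₀ : Type*} [Fintype V] [DecidableEq V] [Fintype E] [Fintype E₀] [DecidableEq E] [DecidableEq E₀]

lemma sum_vanish_offrange (j : E₀ → E) (hjinj : Function.Injective j) (F : E → ℤ)
    (hF : ∀ e, e ∉ Set.range j → F e = 0) : ∑ e, F e = ∑ e₀, F (j e₀) := by
  classical
  rw [← Finset.sum_image (g := j) (f := F) (fun a _ b _ h => hjinj h)]
  refine (Finset.sum_subset (Finset.subset_univ _) ?_).symm
  intro e _ he
  exact hF e (by simpa [Set.mem_range, eq_comm] using he)

lemma boundary_extend (X : DiGraph V E) (X₀ : DiGraph V E₀) (j : E₀ → E)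
    (hjinj : Function.Injective j)
    (hjsrc : ∀ e, X.src (j e) = X₀.src e) (hjtgt : ∀ e, X.tgt (j e) = X₀.tgt e)
    (f₀ : E₀ → ℤ) : X.boundary (Function.extend j f₀ 0) = X₀.boundary f₀ := by
  funext v
  simp only [DiGraph.boundary, LinearMap.coe_mk, AddHom.coe_mk]
  rw [sum_vanish_offrange j hjinj _ (fun e he => by
    rw [Function.extend_apply' _ _ _ (by simpa [Set.mem_range] using he), Pi.zero_apply, zero_mul])]
  refine Finset.sum_congr rfl fun e₀ _ => ?_
  rw [hjinj.extend_apply, hjsrc, hjtgt]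

lemma boundary_single (X : DiGraph V E) (e : E) :
    X.boundary (fun e' => if e' = e then 1 else 0) =
      fun v => (if X.tgt e = v then (1:ℤ) else 0) - (if X.src e = v then 1 else 0) := by
  classical
  funext v
  simp only [DiGraph.boundary, LinearMap.coe_mk, AddHom.coe_mk]
  simp [ite_mul, Finset.sum_ite_eq']

lemma conn_chain (X₀ : DiGraph V E₀) (hconn : X₀.Conn) (u w : V) :
    ∃ f₀ : E₀ → ℤ, X₀.boundary f₀ =
      fun v => (if w = v then (1:ℤ) else 0) - (if u = v then 1 else 0) := by
  classical
  obtain ⟨p⟩ := hconn.preconnected u w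
  induction p with
  | nil => exact ⟨0, by rw [map_zero]; funext v; simp⟩
  | @cons a b c h p ih =>
    obtain ⟨f₁, hf₁⟩ := ih
    rw [SimpleGraph.fromRel_adj] at h
    obtain ⟨hne, h | h⟩ := h
    · obtain ⟨e, he1, he2⟩ := h
      refine ⟨f₁ + fun e' => if e' = e then 1 else 0, ?_⟩
      rw [map_add, hf₁, boundary_single, he1, he2]
      funext v
      simp only [Pi.add_apply]
      ring
    · obtain ⟨e, he1, he2⟩ := h
      refine ⟨f₁ - fun e' => if e' = e then 1 else 0, ?_⟩
      rw [map_sub, hf₁, boundary_single, he1, he2]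
      funext v
      simp only [Pi.sub_apply]
      ring

lemma ker_restrict (X : DiGraph V E) (X₀ : DiGraph V E₀) (j : E₀ → E)
    (hjinj : Function.Injective j)
    (hjsrc : ∀ e, X.src (j e) = X₀.src e) (hjtgt : ∀ e, X.tgt (j e) = X₀.tgt e)
    (h : E → ℤ) (hker : X.boundary h = 0) (hvan : ∀ e, e ∉ Set.range j → h e = 0) :
    X₀.boundary (h ∘ j) = 0 := by
  have hext : Function.extend j (h ∘ j) 0 = h := by
    funext e
    by_cases he : e ∈ Set.range j
    · obtain ⟨e₀, rfl⟩ := he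
      rw [hjinj.extend_apply]
      rfl
    · rw [Function.extend_apply' _ _ _ (by simpa [Set.mem_range] using he), hvan e he]
      rfl
  rw [← boundary_extend X X₀ j hjinj hjsrc hjtgt, hext, hker]

lemma exists_psi {E E₀ G : Type*} [Fintype E] [Fintype E₀] [Group G] [Fintype G]
    (j : E₀ → E) (hjinj : Function.Injective j)
    (actE : G →* Equiv.Perm E)
    (hstab : ∀ (g : G) (e : E), e ∉ Set.range j → actE g e ∉ Set.range j)
    (hfreeE : ∀ (g : G) (e : E), actE g e = e → g = 1)
    (m : ℕ) (hm : Fintype.card E = Fintype.card E₀ + m * Fintype.card G) :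
    ∃ ψ : Fin m → G → E,
      (∀ i x, ψ i x ∉ Set.range j) ∧
      (∀ i x i' x', ψ i x = ψ i' x' → i = i' ∧ x = x') ∧
      (∀ e, e ∉ Set.range j → ∃ i x, ψ i x = e) ∧
      (∀ g i x, actE g (ψ i x) = ψ i (g * x)) := by
  classical
  letI s : Setoid {e : E // e ∉ Set.range j} :=
    ⟨fun a b => ∃ g : G, actE g a.1 = b.1,
      ⟨fun a => ⟨1, by simp⟩,
       fun ⟨g, hg⟩ => ⟨g⁻¹, by rw [← hg, ← Equiv.Perm.mul_apply, ← map_mul, inv_mul_cancel, map_one, Equiv.Perm.one_apply]⟩,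
       fun ⟨g, hg⟩ ⟨g', hg'⟩ => ⟨g' * g, by rw [map_mul, Equiv.Perm.mul_apply, hg, hg']⟩⟩⟩
  let Q := Quotient s
  let Ψ : Q × G → {e : E // e ∉ Set.range j} :=
    fun p => ⟨actE p.2 p.1.out.1, hstab _ _ p.1.out.2⟩
  have hΨinj : Function.Injective Ψ := by
    rintro ⟨q, x⟩ ⟨q', x'⟩ hp
    have h1 : actE x q.out.1 = actE x' q'.out.1 := congrArg Subtype.val hp
    have h2 : actE (x'⁻¹ * x) q.out.1 = q'.out.1 := by
      rw [map_mul, Equiv.Perm.mul_apply, h1, ← Equiv.Perm.mul_apply, ← map_mul,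
        inv_mul_cancel, map_one, Equiv.Perm.one_apply]
    have hq : q = q' := by
      rw [← Quotient.out_eq q, ← Quotient.out_eq q']
      exact Quotient.sound ⟨x'⁻¹ * x, h2⟩
    subst hq
    have h3 : actE (x'⁻¹ * x) q.out.1 = q.out.1 := by
      rw [h2]
    have := hfreeE _ _ h3
    have hx : x' = x := inv_mul_eq_one.mp this
    rw [hx]
  have hΨsurj : Function.Surjective Ψ := by
    rintro ⟨e, he⟩
    obtain ⟨g, hg⟩ := Quotient.mk_out (s := s) ⟨e, he⟩
    exact ⟨(⟦(⟨e, he⟩ : {e : E // e ∉ Set.range j})⟧, g), Subtype.ext hg⟩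
  have hcards : Fintype.card E = Fintype.card E₀ + Fintype.card {e : E // e ∉ Set.range j} := by
    have h1 : Fintype.card {e : E // e ∈ Set.range j} = Fintype.card E₀ :=
      (Fintype.card_congr (Equiv.ofInjective j hjinj)).symm
    have := Fintype.card_subtype_compl (fun e : E => e ∈ Set.range j)
    rw [this, h1]
    omega
  have hcardC : Fintype.card {e : E // e ∉ Set.range j} = m * Fintype.card G := by omega
  have hQG : Fintype.card Q * Fintype.card G = m * Fintype.card G := by
    rw [← Fintype.card_prod, Fintype.card_congr (Equiv.ofBijective Ψ ⟨hΨinj, hΨsurj⟩), hcardC]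
  have hQ : Fintype.card Q = m :=
    Nat.eq_of_mul_eq_mul_right (Fintype.card_pos_iff.mpr ⟨1⟩) hQG
  let eqv : Fin m ≃ Q := (Fintype.equivFinOfCardEq hQ).symm
  refine ⟨fun i x => actE x (eqv i).out.1, ?_, ?_, ?_, ?_⟩
  · intro i x; exact hstab _ _ (eqv i).out.2
  · intro i x i' x' h
    have h0 := hΨinj (a₁ := (eqv i, x)) (a₂ := (eqv i', x')) (Subtype.ext h)
    have h1 : eqv i = eqv i' := congrArg Prod.fst h0
    exact ⟨eqv.injective h1, congrArg Prod.snd h0⟩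
  · intro e he
    obtain ⟨⟨q, x⟩, hq⟩ := hΨsurj ⟨e, he⟩
    exact ⟨eqv.symm q, x, by simp only [Equiv.apply_symm_apply]; exact congrArg Subtype.val hq⟩
  · intro g i x
    rw [← Equiv.Perm.mul_apply, ← map_mul]

end Aux
/-- Suppose a finite group `G` acts freely on `V`, and `E' ⊆ E` (modelled by a
`G`-equivariant injection `j : E₀ → E` of graphs over `V`) are `G`-stable edge sets
with `(V, E')` connected.  Then `Fl(V, E) ≅ Fl(V, E') ⊕ (ℤG)^m` as `G`-lattices, where
`m = (|E| - |E'|)/|G|`, the isomorphism restricting to the natural (extension-by-zero)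
inclusion of `Fl(V, E')`. -/
theorem flow_lattice_of_edge_subset {V E E₀ G : Type*} [Fintype V] [DecidableEq V]
    [Fintype E] [Fintype E₀] [Group G] [Fintype G]
    (X : DiGraph V E) (X₀ : DiGraph V E₀)
    (j : E₀ → E) (hjinj : Function.Injective j)
    (hjsrc : ∀ e, X.src (j e) = X₀.src e) (hjtgt : ∀ e, X.tgt (j e) = X₀.tgt e)
    (actV : G →* Equiv.Perm V) (actE : G →* Equiv.Perm E) (actE₀ : G →* Equiv.Perm E₀)
    (hsrc : ∀ g e, X.src (actE g e) = actV g (X.src e))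
    (htgt : ∀ g e, X.tgt (actE g e) = actV g (X.tgt e))
    (hsrc₀ : ∀ g e, X₀.src (actE₀ g e) = actV g (X₀.src e))
    (htgt₀ : ∀ g e, X₀.tgt (actE₀ g e) = actV g (X₀.tgt e))
    (hjequi : ∀ g e, j (actE₀ g e) = actE g (j e))
    (hfree : ∀ g : G, g ≠ 1 → ∀ v : V, actV g v ≠ v)
    (hconn₀ : X₀.Conn)
    (m : ℕ) (hm : Fintype.card E = Fintype.card E₀ + m * Fintype.card G) :
    ∃ φ : ↥(LinearMap.ker X.boundary) ≃+
        ↥(LinearMap.ker X₀.boundary) × (Fin m → (G → ℤ)),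
      (∀ (g : G) (f : ↥(LinearMap.ker X.boundary)),
        (((φ (flowRep X actV actE hsrc htgt g f)).1 : E₀ → ℤ)
            = eshift (actE₀ g) ((φ f).1 : E₀ → ℤ)) ∧
        (φ (flowRep X actV actE hsrc htgt g f)).2
            = fun i x => (φ f).2 i (g⁻¹ * x)) ∧
      ∀ (f₀ : E₀ → ℤ) (hf₀ : f₀ ∈ LinearMap.ker X₀.boundary)
        (f : E → ℤ) (hf : f ∈ LinearMap.ker X.boundary),
          (∀ e₀, f (j e₀) = f₀ e₀) → (∀ e, e ∉ Set.range j → f e = 0) →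
          φ ⟨f, hf⟩ = (⟨f₀, hf₀⟩, 0) := by
  classical
  have hstab : ∀ (g : G) (e : E), e ∉ Set.range j → actE g e ∉ Set.range j := by
    intro g e he hmem
    obtain ⟨e₀, h0⟩ := hmem
    exact he ⟨actE₀ g⁻¹ e₀, by
      rw [hjequi, h0, ← Equiv.Perm.mul_apply, ← map_mul, inv_mul_cancel, map_one,
        Equiv.Perm.one_apply]⟩
  have hfreeE : ∀ (g : G) (e : E), actE g e = e → g = 1 := by
    intro g e h
    by_contra hg
    exact hfree g hg (X.src e) (by rw [← hsrc g e, h])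
  obtain ⟨ψ, hψr, hψi, hψs, hψe⟩ := exists_psi j hjinj actE hstab hfreeE m hm
  have hψinv : ∀ (x : G) (i : Fin m) (y : G), (actE x)⁻¹ (ψ i y) = ψ i (x⁻¹ * y) := by
    intro x i y
    rw [← map_inv, hψe]
  have hσex : ∀ i : Fin m, ∃ σ : E → ℤ, X.boundary σ = 0 ∧ σ (ψ i 1) = 1 ∧
      ∀ e, e ∉ Set.range j → e ≠ ψ i 1 → σ e = 0 := by
    intro i
    obtain ⟨f₀, hf₀⟩ := conn_chain X₀ hconn₀ (X.tgt (ψ i 1)) (X.src (ψ i 1))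
    have hnr : ¬∃ e₀, j e₀ = ψ i 1 := by simpa [Set.mem_range] using hψr i 1
    refine ⟨(fun e' => if e' = ψ i 1 then 1 else 0) + Function.extend j f₀ 0, ?_, ?_, ?_⟩
    · rw [map_add, boundary_single, boundary_extend X X₀ j hjinj hjsrc hjtgt, hf₀]
      funext v
      simp only [Pi.add_apply, Pi.zero_apply]
      ring
    · simp [Function.extend_apply' _ _ _ hnr]
    · intro e he hne
      have hnr' : ¬∃ e₀, j e₀ = e := by simpa [Set.mem_range] using he
      simp [hne, Function.extend_apply' _ _ _ hnr']
  choose σ hσker hσone hσzero using hσex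
  have hσeval : ∀ (i : Fin m) (x : G) (i' : Fin m) (y : G),
      σ i ((actE x)⁻¹ (ψ i' y)) = if i = i' ∧ x = y then 1 else 0 := by
    intro i x i' y
    rw [hψinv]
    by_cases h : i = i' ∧ x = y
    · obtain ⟨rfl, rfl⟩ := h
      rw [if_pos ⟨rfl, rfl⟩, inv_mul_cancel, hσone]
    · rw [if_neg h]
      refine hσzero i _ (hψr _ _) fun hc => ?_
      obtain ⟨hi, hx⟩ := hψi _ _ _ _ hc
      exact h ⟨hi.symm, inv_mul_eq_one.mp hx⟩
  set Sig : (Fin m → G → ℤ) → (E → ℤ) :=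
    fun c e => ∑ i, ∑ x, c i x * σ i ((actE x)⁻¹ e) with hSigdef
  have hSigker : ∀ c, X.boundary (Sig c) = 0 := by
    intro c
    have h1 : Sig c = ∑ i : Fin m, ∑ x : G, c i x • eshift (actE x) (σ i) := by
      funext e
      simp [hSigdef, eshift, Finset.sum_apply, Pi.smul_apply, smul_eq_mul]
    have hmem : (∑ i : Fin m, ∑ x : G, c i x • eshift (actE x) (σ i)) ∈ LinearMap.ker X.boundary :=
      Submodule.sum_mem _ fun i _ => Submodule.sum_mem _ fun x _ =>
        Submodule.smul_mem _ _ (eshift_flow_mem X actV actE hsrc htgt x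
          (LinearMap.mem_ker.mpr (hσker i)))
    rw [h1]
    exact LinearMap.mem_ker.mp hmem
  have hSigψ : ∀ (c : Fin m → G → ℤ) (i : Fin m) (x : G), Sig c (ψ i x) = c i x := by
    intro c i x
    rw [hSigdef]
    have h2 : ∀ (i' : Fin m) (y : G), c i' y * σ i' ((actE y)⁻¹ (ψ i x)) =
        if i' = i ∧ y = x then c i' y else 0 := by
      intro i' y
      rw [hσeval i' y i x]
      split_ifs <;> simp
    calc (∑ i', ∑ y, c i' y * σ i' ((actE y)⁻¹ (ψ i x)))
        = ∑ i' : Fin m, ∑ y : G, if i' = i ∧ y = x then c i' y else 0 :=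
          Finset.sum_congr rfl fun i' _ => Finset.sum_congr rfl fun y _ => h2 i' y
      _ = ∑ i' : Fin m, if i' = i then c i' x else 0 := by
          refine Finset.sum_congr rfl fun i' _ => ?_
          by_cases h : i' = i
          · subst h; simp
          · simp [h]
      _ = c i x := by simp
  have hsubv : ∀ f : E → ℤ, ∀ e, e ∉ Set.range j →
      (f - Sig fun i x => f (ψ i x)) e = 0 := by
    intro f e he
    obtain ⟨i, x, rfl⟩ := hψs e he
    simp [hSigψ]
  have hmem1 : ∀ f : E → ℤ, X.boundary f = 0 →
      X₀.boundary ((f - Sig fun i x => f (ψ i x)) ∘ j) = 0 := by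
    intro f hf
    refine ker_restrict X X₀ j hjinj hjsrc hjtgt _ ?_ (hsubv f)
    rw [map_sub, hf, hSigker, zero_sub, neg_eq_zero]
  have hextid : ∀ f : E → ℤ, (∀ e, e ∉ Set.range j → f e = 0) →
      Function.extend j (f ∘ j) 0 = f := by
    intro f hvan
    funext e
    by_cases he : e ∈ Set.range j
    · obtain ⟨e₀, rfl⟩ := he
      rw [hjinj.extend_apply]; rfl
    · rw [Function.extend_apply' _ _ _ (by simpa [Set.mem_range] using he), hvan e he]; rfl
  have hSigadd : ∀ c c' : Fin m → G → ℤ, Sig (c + c') = Sig c + Sig c' := by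
    intro c c'
    funext e
    simp [hSigdef, add_mul, Finset.sum_add_distrib]
  have hSigshift : ∀ (c : Fin m → G → ℤ) (g : G),
      Sig (fun i x => c i (g⁻¹ * x)) = eshift (actE g) (Sig c) := by
    intro c g
    funext e
    rw [hSigdef]
    simp only [eshift]
    refine Finset.sum_congr rfl fun i _ => ?_
    rw [← Equiv.sum_comp (Equiv.mulLeft g) (fun x => c i (g⁻¹ * x) * σ i ((actE x)⁻¹ e))]
    refine Finset.sum_congr rfl fun y _ => ?_
    simp only [Equiv.coe_mulLeft]
    rw [inv_mul_cancel_left, map_mul, mul_inv_rev, Equiv.Perm.mul_apply]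
  refine ⟨{
      toFun := fun f =>
        (⟨((f : E → ℤ) - Sig fun i x => (f : E → ℤ) (ψ i x)) ∘ j,
            LinearMap.mem_ker.mpr (hmem1 _ (LinearMap.mem_ker.mp f.2))⟩,
          fun i x => (f : E → ℤ) (ψ i x)),
      invFun := fun p =>
        ⟨Function.extend j (p.1 : E₀ → ℤ) 0 + Sig p.2, by
          rw [LinearMap.mem_ker, map_add,
            boundary_extend X X₀ j hjinj hjsrc hjtgt, hSigker, add_zero]
          exact LinearMap.mem_ker.mp p.1.2⟩,
      left_inv := by
        intro f
        refine Subtype.ext ?_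
        simp only []
        rw [hextid ((f : E → ℤ) - Sig fun i x => (f : E → ℤ) (ψ i x)) (hsubv _)]
        funext e
        simp only [Pi.add_apply, Pi.sub_apply]
        ring,
      right_inv := by
        rintro ⟨f₀, c⟩
        have hcoeff : (fun i x => (Function.extend j (f₀ : E₀ → ℤ) 0 + Sig c) (ψ i x)) = c := by
          funext i x
          simp only [Pi.add_apply]
          rw [Function.extend_apply' _ _ _ (by simpa [Set.mem_range] using hψr i x),
            hSigψ, Pi.zero_apply, zero_add]
        refine Prod.ext (Subtype.ext ?_) ?_
        · simp only []
          rw [hcoeff]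
          funext e₀
          simp only [Function.comp_apply, Pi.sub_apply, Pi.add_apply]
          rw [hjinj.extend_apply]
          ring
        · exact hcoeff,
      map_add' := by
        intro f g
        refine Prod.ext (Subtype.ext ?_) ?_
        · have hc : (fun i x => ((f + g : ↥(LinearMap.ker X.boundary)) : E → ℤ) (ψ i x))
              = (fun i x => (f : E → ℤ) (ψ i x)) + (fun i x => (g : E → ℤ) (ψ i x)) := by
            funext i x
            simp
          have hsplit : ∀ e, Sig (fun i x => (f : E → ℤ) (ψ i x) + (g : E → ℤ) (ψ i x)) e
              = Sig (fun i x => (f : E → ℤ) (ψ i x)) e + Sig (fun i x => (g : E → ℤ) (ψ i x)) e := by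
            intro e
            simp [hSigdef, add_mul, Finset.sum_add_distrib]
          funext e₀
          simp only [Function.comp_apply, Pi.sub_apply, Pi.add_apply, Prod.fst_add,
            Submodule.coe_add]
          rw [hsplit]
          ring
        · funext i x
          simp }, ?_, ?_⟩
  · intro g f
    have hkey : Sig (fun i x => eshift (actE g) (f : E → ℤ) (ψ i x))
        = eshift (actE g) (Sig fun i x => (f : E → ℤ) (ψ i x)) := by
      rw [← hSigshift (fun i x => (f : E → ℤ) (ψ i x)) g]
      exact congrArg Sig (by funext i x; simp only [eshift]; rw [hψinv])
    have hco : ((flowRep X actV actE hsrc htgt g f : ↥(LinearMap.ker X.boundary)) : E → ℤ)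
        = eshift (actE g) (f : E → ℤ) := rfl
    constructor
    · simp only [AddEquiv.coe_mk, Equiv.coe_fn_mk, hco]
      rw [hkey]
      funext e₀
      simp only [Function.comp_apply, Pi.sub_apply, eshift]
      have hje : (actE g)⁻¹ (j e₀) = j ((actE₀ g)⁻¹ e₀) := by
        rw [← map_inv, ← map_inv, hjequi]
      rw [hje]
    · simp only [AddEquiv.coe_mk, Equiv.coe_fn_mk, hco]
      funext i x
      simp only [eshift]
      rw [hψinv]
  · intro f₀ hf₀ f hf hfj hfz
    have hc0 : (fun i x => f (ψ i x)) = (fun _ _ => 0 : Fin m → G → ℤ) := by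
      funext i x
      exact hfz _ (hψr i x)
    have hS0 : Sig (fun _ _ => 0) = 0 := by
      funext e
      simp [hSigdef]
    refine Prod.ext (Subtype.ext ?_) ?_
    · simp only [AddEquiv.coe_mk, Equiv.coe_fn_mk]
      rw [hc0, hS0]
      funext e₀
      simp only [Function.comp_apply, Pi.sub_apply, Pi.zero_apply, sub_zero]
      exact hfj e₀
    · simp only [AddEquiv.coe_mk, Equiv.coe_fn_mk]
      rw [hc0]
      rfl
end

section
/- Let G be a finite group with subgroups H₁, ..., H_k such that gcd([G:H₁], ..., [G:H_k]) = 1. Let M be a G-lattice. If the restriction M|_{H_i} is an invertible H_i-lattice (i.e., a direct summand of a permutation H_i-lattice) for every i, then M is an invertible G-lattice. -/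
/-- The multiplicative group structure on `AddAut A` (composition), as in the older Mathlib,
where `AddAut A` was a `Group`; it is now an additive group. -/
instance AddAut.group (A : Type*) [Add A] : Group (AddAut A) where
  mul g h := AddEquiv.trans h g
  one := AddEquiv.refl _
  inv := AddEquiv.symm
  mul_assoc _ _ _ := rfl
  one_mul _ := rfl
  mul_one _ := rfl
  inv_mul_cancel := AddEquiv.self_trans_symm

theorem AddAut.group_mul_apply {A : Type*} [Add A] (e₁ e₂ : AddAut A) (m : A) :
    (e₁ * e₂) m = e₁ (e₂ m) := rfl

theorem AddAut.group_one_apply {A : Type*} [Add A] (m : A) : (1 : AddAut A) m = m := rfl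

/-- A 1-cohomology-vanishing ("coflasque") condition for an action `ρ` of `G` on `M`:
every 1-cocycle of every subgroup is a coboundary. -/
def IsCoflasque {G M : Type*} [Group G] [AddCommGroup M] (ρ : G →* AddAut M) : Prop :=
  ∀ (H : Subgroup G) (c : ↥H → M),
    (∀ g h : ↥H, c (g * h) = c g + ρ ↑g (c h)) → ∃ m : M, ∀ g : ↥H, c g = ρ ↑g m - m

/-- "Flasque" condition (vanishing of `Ĥ⁻¹` for all subgroups): every element killed by
the norm of a subgroup lies in the augmentation submodule. -/
def IsFlasque {G M : Type*} [Group G] [Finite G] [AddCommGroup M] (ρ : G →* AddAut M) : Prop :=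
  ∀ (H : Subgroup G) (x : M), (∑ᶠ h : ↥H, ρ ↑h x = 0) →
    x ∈ AddSubgroup.closure {y | ∃ (h : ↥H) (m : M), y = ρ ↑h m - m}

/-- The permutation action of `G` on `ι → ℤ` induced by an action on `ι`. -/
def permAut {G ι : Type*} [Group G] (act : G →* Equiv.Perm ι) : G →* AddAut (ι → ℤ) where
  toFun g :=
    { toEquiv := Equiv.arrowCongr (act g) (Equiv.refl ℤ)
      map_add' := fun _ _ => rfl }
  map_one' := by ext f i; simp [AddAut.group_one_apply]; rfl
  map_mul' := by
    intro g h; ext f i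
    simp [← Equiv.Perm.inv_def, mul_inv_rev, Equiv.Perm.mul_apply, AddAut.group_mul_apply]; rfl

/-- `ρ` is a permutation representation: `M` is equivariantly isomorphic to a
finitely generated permutation `G`-lattice. -/
def IsPermutationRep {G M : Type*} [Group G] [AddCommGroup M] (ρ : G →* AddAut M) : Prop :=
  ∃ (ι : Type) (_ : Fintype ι) (act : G →* Equiv.Perm ι) (e : M ≃+ (ι → ℤ)),
    ∀ (g : G) (m : M), e (ρ g m) = permAut act g (e m)

/-- `ρ` is invertible (permutation projective): `M` is an equivariant direct summand of a
finitely generated permutation `G`-lattice. -/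
def IsInvertibleRep {G M : Type*} [Group G] [AddCommGroup M] (ρ : G →* AddAut M) : Prop :=
  ∃ (ι : Type) (_ : Fintype ι) (act : G →* Equiv.Perm ι)
    (f : M →+ (ι → ℤ)) (g : (ι → ℤ) →+ M),
      (∀ (γ : G) (m : M), f (ρ γ m) = permAut act γ (f m)) ∧
      (∀ (γ : G) (x : ι → ℤ), g (permAut act γ x) = ρ γ (g x)) ∧
      (∀ m : M, g (f m) = m)

/-- The diagonal action on a product. -/
def prodAut {G M N : Type*} [Group G] [AddCommGroup M] [AddCommGroup N]
    (ρ : G →* AddAut M) (σ : G →* AddAut N) : G →* AddAut (M × N) where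
  toFun g := AddEquiv.prodCongr (ρ g) (σ g)
  map_one' := by
    ext x <;> simp [AddEquiv.prodCongr, AddAut.group_one_apply]
  map_mul' := by
    intro g h
    ext x <;> simp [AddEquiv.prodCongr, AddAut.group_mul_apply]


/-- Bezout for a finset gcd of naturals. -/
lemma bezout_finset {k : ℕ} (f : Fin k → ℕ) (s : Finset (Fin k)) :
    ∃ a : Fin k → ℤ, ∑ i ∈ s, a i * (f i : ℤ) = ((s.gcd f : ℕ) : ℤ) := by
  classical
  induction s using Finset.induction with
  | empty => exact ⟨0, by simp⟩
  | @insert j s hj ih =>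
    obtain ⟨a, ha⟩ := ih
    set A := Nat.gcdA (f j) (s.gcd f) with hA
    set B := Nat.gcdB (f j) (s.gcd f) with hB
    refine ⟨fun i => if i = j then A else a i * B, ?_⟩
    rw [Finset.sum_insert hj, Finset.gcd_insert]
    have h1 : ∑ i ∈ s, (if i = j then A else a i * B) * (f i : ℤ)
        = ∑ i ∈ s, (a i * B) * (f i : ℤ) :=
      Finset.sum_congr rfl fun i hi => by rw [if_neg (by rintro rfl; exact hj hi)]
    have h2 : ∑ i ∈ s, (a i * B) * (f i : ℤ) = ((s.gcd f : ℕ) : ℤ) * B := by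
      rw [Finset.sum_congr rfl fun i _ => mul_right_comm (a i) B (f i : ℤ), ← Finset.sum_mul, ha]
    have h3 := Nat.gcd_eq_gcd_ab (f j) (s.gcd f)
    have h4 : ((GCDMonoid.gcd (f j) (s.gcd f) : ℕ) : ℤ) = ((Nat.gcd (f j) (s.gcd f) : ℕ) : ℤ) := by
      norm_cast
    rw [h1, h2, show (fun i => if i = j then A else a i * B) j = A from if_pos rfl, h4, h3]; ring

lemma permAut_apply {G ι : Type*} [Group G] (act : G →* Equiv.Perm ι) (g : G)
    (f : ι → ℤ) (i : ι) : permAut act g f i = f ((act g)⁻¹ i) := rfl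

section Cocycle

variable {G : Type*} [Group G] (H : Subgroup G)

noncomputable def cocyc (γ : G) (q : G ⧸ H) : ↥H :=
  ⟨((γ • q).out)⁻¹ * (γ * q.out), by
    rw [← QuotientGroup.eq, QuotientGroup.out_eq']
    exact (MulAction.Quotient.coe_smul_out H γ q).symm⟩

lemma cocyc_coe (γ : G) (q : G ⧸ H) :
    (cocyc H γ q : G) = ((γ • q).out)⁻¹ * (γ * q.out) := rfl

lemma cocyc_one (q : G ⧸ H) : cocyc H 1 q = 1 :=
  Subtype.ext (by simp [cocyc_coe])

lemma cocyc_mul (γ₁ γ₂ : G) (q : G ⧸ H) :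
    cocyc H (γ₁ * γ₂) q = cocyc H γ₁ (γ₂ • q) * cocyc H γ₂ q := by
  apply Subtype.ext
  simp only [Subgroup.coe_mul, cocyc_coe, mul_smul]
  group

variable {ι : Type*} (act : ↥H →* Equiv.Perm ι)

noncomputable def indFun (γ : G) (p : (G ⧸ H) × ι) : (G ⧸ H) × ι :=
  (γ • p.1, act (cocyc H γ p.1) p.2)

lemma indFun_one : indFun H act 1 = id := by
  funext p
  simp [indFun, cocyc_one]

lemma indFun_mul (γ₁ γ₂ : G) :
    indFun H act (γ₁ * γ₂) = indFun H act γ₁ ∘ indFun H act γ₂ := by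
  funext p
  simp [indFun, cocyc_mul, mul_smul, Equiv.Perm.mul_apply]

noncomputable def indPerm : G →* Equiv.Perm ((G ⧸ H) × ι) where
  toFun γ :=
    { toFun := indFun H act γ
      invFun := indFun H act γ⁻¹
      left_inv := fun p => by
        have : indFun H act γ⁻¹ (indFun H act γ p) = indFun H act (γ⁻¹ * γ) p := by
          rw [indFun_mul]; rfl
        rw [this, inv_mul_cancel, indFun_one]; rfl
      right_inv := fun p => by
        have : indFun H act γ (indFun H act γ⁻¹ p) = indFun H act (γ * γ⁻¹) p := by
          rw [indFun_mul]; rfl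
        rw [this, mul_inv_cancel, indFun_one]; rfl }
  map_one' := Equiv.ext fun p => by
    show indFun H act 1 p = p
    rw [indFun_one]; rfl
  map_mul' γ₁ γ₂ := Equiv.ext fun p => by
    show indFun H act (γ₁ * γ₂) p = indFun H act γ₁ (indFun H act γ₂ p)
    rw [indFun_mul]; rfl

lemma indPerm_inv_apply (γ : G) (q : G ⧸ H) (x : ι) :
    (indPerm H act γ)⁻¹ (q, x) = (γ⁻¹ • q, act (cocyc H γ⁻¹ q) x) := rfl

end Cocycle

/-- Composing an action of `G` on `M` pointwise: `ρ a (ρ b m) = ρ (a*b) m`. -/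
lemma rho_mul_apply {G M : Type*} [Group G] [AddCommGroup M] (ρ : G →* AddAut M)
    (a b : G) (m : M) : ρ a (ρ b m) = ρ (a * b) m := by
  rw [map_mul]; rfl


/-- Transport summand data along an equivalence of index types. -/
lemma summand_transport {G M : Type*} [Group G] [AddCommGroup M] (ρ : G →* AddAut M)
    {κ : Type*} {n : ℕ} (d : ℕ) (e : κ ≃ Fin n)
    (act : G →* Equiv.Perm κ) (F : M →+ (κ → ℤ)) (Gm : (κ → ℤ) →+ M)
    (h1 : ∀ (γ : G) (m : M), F (ρ γ m) = permAut act γ (F m))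
    (h2 : ∀ (γ : G) (x : κ → ℤ), Gm (permAut act γ x) = ρ γ (Gm x))
    (h3 : ∀ m : M, Gm (F m) = d • m) :
    ∃ (act' : G →* Equiv.Perm (Fin n)) (F' : M →+ (Fin n → ℤ)) (Gm' : (Fin n → ℤ) →+ M),
      (∀ (γ : G) (m : M), F' (ρ γ m) = permAut act' γ (F' m)) ∧
      (∀ (γ : G) (x : Fin n → ℤ), Gm' (permAut act' γ x) = ρ γ (Gm' x)) ∧
      (∀ m : M, Gm' (F' m) = d • m) := by
  refine ⟨{ toFun := fun γ => (e.symm.trans (act γ)).trans e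
            map_one' := by ext j; simp
            map_mul' := fun γ₁ γ₂ => by
              ext j
              simp [Equiv.Perm.mul_apply] },
    AddMonoidHom.mk' (fun m j => F m (e.symm j)) (by
      intro m₁ m₂; funext j; simp [map_add]),
    AddMonoidHom.mk' (fun ψ => Gm (fun p => ψ (e p))) (by
      intro ψ₁ ψ₂
      show Gm (fun p => (ψ₁ + ψ₂) (e p)) = Gm (fun p => ψ₁ (e p)) + Gm (fun p => ψ₂ (e p))
      have : (fun p => (ψ₁ + ψ₂) (e p)) = (fun p => ψ₁ (e p)) + (fun p => ψ₂ (e p)) := rfl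
      rw [this, map_add]), ?_, ?_, ?_⟩
  · intro γ m
    funext j
    show F (ρ γ m) (e.symm j) = F m (e.symm (e ((act γ).symm (e.symm j))))
    rw [Equiv.symm_apply_apply, h1]
    rfl
  · intro γ ψ
    show Gm (fun p => ψ (e ((act γ).symm (e.symm (e p))))) = ρ γ (Gm (fun p => ψ (e p)))
    have : (fun p => ψ (e ((act γ).symm (e.symm (e p)))))
        = permAut act γ (fun p => ψ (e p)) := by
      funext p
      rw [Equiv.symm_apply_apply]
      rfl
    rw [this, h2]
  · intro m
    show Gm (fun p => F m (e.symm (e p))) = d • m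
    rw [show (fun p => F m (e.symm (e p))) = F m from funext fun p => by
      rw [Equiv.symm_apply_apply], h3]

/-- If the restriction of `ρ` to `H` is invertible, then `M` is a direct summand of an
induced (hence permutation) `G`-lattice, up to multiplication by the index. -/
lemma induced_of_invertible {G M : Type*} [Group G] [Fintype G] [AddCommGroup M]
    (ρ : G →* AddAut M) (H : Subgroup G)
    (h : IsInvertibleRep (ρ.comp H.subtype)) :
    ∃ (κ : Type) (_ : Fintype κ) (act : G →* Equiv.Perm κ)
      (F : M →+ (κ → ℤ)) (Gm : (κ → ℤ) →+ M),
      (∀ (γ : G) (m : M), F (ρ γ m) = permAut act γ (F m)) ∧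
      (∀ (γ : G) (x : κ → ℤ), Gm (permAut act γ x) = ρ γ (Gm x)) ∧
      (∀ m : M, Gm (F m) = H.index • m) := by
  classical
  obtain ⟨ι, ιfin, act, f, g, hf, hg, hgf⟩ := h
  haveI : Fintype (G ⧸ H) := Fintype.ofFinite _
  let F : M →+ ((G ⧸ H) × ι → ℤ) :=
    AddMonoidHom.mk' (fun m p => f (ρ (p.1.out)⁻¹ m) p.2) (by
      intro m₁ m₂
      funext p
      simp [map_add])
  let Gm : ((G ⧸ H) × ι → ℤ) →+ M :=
    AddMonoidHom.mk' (fun φ => ∑ q : G ⧸ H, ρ q.out (g (fun x => φ (q, x)))) (by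
      intro φ ψ
      rw [← Finset.sum_add_distrib]
      refine Finset.sum_congr rfl fun q _ => ?_
      have : (fun x => (φ + ψ) (q, x)) = (fun x => φ (q, x)) + (fun x => ψ (q, x)) := rfl
      rw [this, map_add, map_add])
  have main : (∀ (γ : G) (m : M), F (ρ γ m) = permAut (indPerm H act) γ (F m)) ∧
      (∀ (γ : G) (x : (G ⧸ H) × ι → ℤ), Gm (permAut (indPerm H act) γ x) = ρ γ (Gm x)) ∧
      (∀ m : M, Gm (F m) = H.index • m) := by
    refine ⟨?_, ?_, ?_⟩
    · intro γ m
      funext p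
      obtain ⟨q, x⟩ := p
      have hf' : ∀ (c : ↥H) (m' : M), f (ρ ↑c m') = permAut act c (f m') :=
        fun c m' => hf c m'
      have hsymm : permAut (indPerm H act) γ (F m) (q, x)
          = f (ρ ((γ⁻¹ • q).out)⁻¹ m) (act (cocyc H γ⁻¹ q) x) := rfl
      rw [hsymm]
      show f (ρ (q.out)⁻¹ (ρ γ m)) x = _
      have key : ρ (q.out)⁻¹ (ρ γ m)
          = ρ ↑((cocyc H γ⁻¹ q)⁻¹) (ρ ((γ⁻¹ • q).out)⁻¹ m) := by
        rw [rho_mul_apply, rho_mul_apply,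
          show (((cocyc H γ⁻¹ q)⁻¹ : ↥H) : G)
              = (((γ⁻¹ • q).out)⁻¹ * (γ⁻¹ * q.out))⁻¹ from rfl,
          show (q.out)⁻¹ * γ
              = (((γ⁻¹ • q).out)⁻¹ * (γ⁻¹ * q.out))⁻¹ * ((γ⁻¹ • q).out)⁻¹ from by group]
      rw [key, hf', permAut_apply, map_inv act, inv_inv]
    · intro γ φ
      show ∑ q : G ⧸ H, ρ q.out (g (fun x => permAut (indPerm H act) γ φ (q, x)))
          = ρ γ (∑ q : G ⧸ H, ρ q.out (g (fun x => φ (q, x))))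
      have step : ∀ q : G ⧸ H,
          ρ q.out (g (fun x => permAut (indPerm H act) γ φ (q, x)))
          = ρ γ (ρ ((γ⁻¹ • q).out) (g (fun x => φ (γ⁻¹ • q, x)))) := by
        intro q
        have hg' : ∀ (c : ↥H) (y : ι → ℤ), g (permAut act c y) = ρ ↑c (g y) :=
          fun c y => hg c y
        have e1 : (fun x => permAut (indPerm H act) γ φ (q, x))
            = permAut act (cocyc H γ⁻¹ q)⁻¹ (fun x => φ (γ⁻¹ • q, x)) := by
          funext x
          rw [permAut_apply, indPerm_inv_apply, permAut_apply, map_inv act, inv_inv]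
        rw [e1, hg', rho_mul_apply, rho_mul_apply,
          show (((cocyc H γ⁻¹ q)⁻¹ : ↥H) : G)
              = (((γ⁻¹ • q).out)⁻¹ * (γ⁻¹ * q.out))⁻¹ from rfl,
          show q.out * (((γ⁻¹ • q).out)⁻¹ * (γ⁻¹ * q.out))⁻¹
              = γ * (γ⁻¹ • q).out from by group]
      rw [Finset.sum_congr rfl fun q _ => step q]
      rw [← map_sum (ρ γ : M ≃+ M) _ Finset.univ]
      congr 1
      exact Fintype.sum_equiv (MulAction.toPerm γ⁻¹) _ _ fun q => rfl
    · intro m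
      show ∑ q : G ⧸ H, ρ q.out (g (fun x => f (ρ (q.out)⁻¹ m) x)) = H.index • m
      have : ∀ q : G ⧸ H, ρ q.out (g (fun x => f (ρ (q.out)⁻¹ m) x)) = m := by
        intro q
        have : (fun x => f (ρ (q.out)⁻¹ m) x) = f (ρ (q.out)⁻¹ m) := rfl
        rw [this, hgf, rho_mul_apply, mul_inv_cancel, map_one]
        rfl
      rw [Finset.sum_congr rfl fun q _ => this q, Finset.sum_const, Finset.card_univ]
      congr 1
      rw [Subgroup.index, Nat.card_eq_fintype_card]
  obtain ⟨hm1, hm2, hm3⟩ := main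
  obtain ⟨act', F', Gm', h1, h2, h3⟩ := summand_transport ρ H.index
    (Fintype.equivFin ((G ⧸ H) × ι)) (indPerm H act) F Gm hm1 hm2 hm3
  exact ⟨Fin (Fintype.card ((G ⧸ H) × ι)), inferInstance, act', F', Gm', h1, h2, h3⟩

/-- Sigma of permutation representations. -/
def sigmaPerm {G : Type*} [Group G] {k : ℕ} {κ : Fin k → Type}
    (act : ∀ i, G →* Equiv.Perm (κ i)) : G →* Equiv.Perm (Σ i, κ i) where
  toFun g := Equiv.sigmaCongrRight (fun i => act i g)
  map_one' := Equiv.ext fun p => by rcases p with ⟨i, x⟩; simp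
  map_mul' g h := Equiv.ext fun p => by rcases p with ⟨i, x⟩; simp [Equiv.Perm.mul_apply]

lemma sigmaPerm_inv_apply {G : Type*} [Group G] {k : ℕ} {κ : Fin k → Type}
    (act : ∀ i, G →* Equiv.Perm (κ i)) (γ : G) (i : Fin k) (x : κ i) :
    (sigmaPerm act γ)⁻¹ ⟨i, x⟩ = ⟨i, ((act i γ)⁻¹ : Equiv.Perm (κ i)) x⟩ := rfl


/-- If the restrictions of a `G`-lattice `M` to subgroups `H₁, …, H_k` of coprime indices
are all invertible (direct summands of permutation lattices), then `M` is an invertible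
`G`-lattice. -/
theorem invertible_of_coprime_restrictions {G M : Type*} [Group G] [Fintype G]
    [AddCommGroup M] [Module.Free ℤ M] [Module.Finite ℤ M]
    (ρ : G →* AddAut M) {k : ℕ} (Hs : Fin k → Subgroup G)
    (hgcd : (Finset.univ : Finset (Fin k)).gcd (fun i => (Hs i).index) = 1)
    (hinv : ∀ i, IsInvertibleRep (ρ.comp (Hs i).subtype)) :
    IsInvertibleRep ρ := by
  classical
  have pack : ∀ i : Fin k, ∃ (κ : Type) (_ : Fintype κ) (act : G →* Equiv.Perm κ)
      (F : M →+ (κ → ℤ)) (Gm : (κ → ℤ) →+ M),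
      (∀ (γ : G) (m : M), F (ρ γ m) = permAut act γ (F m)) ∧
      (∀ (γ : G) (x : κ → ℤ), Gm (permAut act γ x) = ρ γ (Gm x)) ∧
      (∀ m : M, Gm (F m) = (Hs i).index • m) :=
    fun i => induced_of_invertible ρ (Hs i) (hinv i)
  choose κ κfin act F Gm hF hG hFG using pack
  haveI : ∀ i, Fintype (κ i) := κfin
  obtain ⟨a, ha⟩ := bezout_finset (fun i => (Hs i).index) Finset.univ
  rw [hgcd, Nat.cast_one] at ha
  let Ft : M →+ ((Σ i, κ i) → ℤ) :=
    AddMonoidHom.mk' (fun m p => F p.1 m p.2) (by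
      intro m₁ m₂; funext p; simp [map_add])
  let Gt : ((Σ i, κ i) → ℤ) →+ M :=
    AddMonoidHom.mk' (fun φ => ∑ i, a i • Gm i (fun x => φ ⟨i, x⟩)) (by
      intro φ ψ
      rw [← Finset.sum_add_distrib]
      refine Finset.sum_congr rfl fun i _ => ?_
      have : (fun x => (φ + ψ) ⟨i, x⟩) = (fun x => φ ⟨i, x⟩) + (fun x => ψ ⟨i, x⟩) := rfl
      rw [this, map_add, smul_add])
  refine ⟨Σ i, κ i, inferInstance, sigmaPerm act, Ft, Gt, ?_, ?_, ?_⟩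
  · intro γ m
    funext p
    obtain ⟨i, x⟩ := p
    show F i (ρ γ m) x = Ft m ((sigmaPerm act γ)⁻¹ ⟨i, x⟩)
    rw [sigmaPerm_inv_apply]
    show F i (ρ γ m) x = F i m (((act i γ)⁻¹ : Equiv.Perm (κ i)) x)
    rw [hF]
    rfl
  · intro γ φ
    show ∑ i, a i • Gm i (fun x => permAut (sigmaPerm act) γ φ ⟨i, x⟩)
        = ρ γ (∑ i, a i • Gm i (fun x => φ ⟨i, x⟩))
    rw [map_sum (ρ γ : M ≃+ M) _ Finset.univ]
    refine Finset.sum_congr rfl fun i _ => ?_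
    have e1 : (fun x => permAut (sigmaPerm act) γ φ ⟨i, x⟩)
        = permAut (act i) γ (fun x => φ ⟨i, x⟩) := by
      funext x
      rw [permAut_apply, sigmaPerm_inv_apply]
      rfl
    rw [e1, hG]
    exact (map_zsmul (ρ γ : M ≃+ M) _ _).symm
  · intro m
    show ∑ i, a i • Gm i (fun x => F i m x) = m
    have : ∀ i : Fin k, a i • Gm i (fun x => F i m x) = (a i * ((Hs i).index : ℤ)) • m := by
      intro i
      rw [show (fun x => F i m x) = F i m from rfl, hFG,
        ← natCast_zsmul m ((Hs i).index), smul_smul]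
    rw [Finset.sum_congr rfl fun i _ => this i, ← Finset.sum_smul, ha, one_smul]
end

section
/- Let G = ⟨σ, τ | σⁿ = τ^m = e, τ⁻¹στ = σ^r⟩ with gcd(n, m) = 1 and r^m ≡ 1 (mod n). In the free ℤG-module ℤ(G/⟨σ⟩) ⊕ ℤ(G/⟨τ⟩) ⊕ ℤG with generators Ŝ = e⟨σ⟩, T̂ = e⟨τ⟩, Â = e, and with π mapping Ŝ, T̂, Â to the flows S, T, A on the Cayley graph Cay(G, {σ, τ}) (S the σ-cycle at e, T the τ-cycle at e, A = (e→σ→στ) - (e→τ→τσ→⋯→τσ^r)), the element U_e := N_σ·Â - Ŝ + r·τŜ lies in ker(π), where N_σ = ∑_{i=0}^{n-1} σ^i. -/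
/-- The circular flow `S : e → σ → σ² → ⋯ → σ^{n-1} → e` on the Cayley graph of `G`
with respect to `{σ, τ}`, whose edges are indexed by `G × Bool` (`(g, false)` is the
edge `g → gσ`, `(g, true)` is the edge `g → gτ`). -/
def flowS {G : Type*} [Group G] [DecidableEq G] (σ : G) (n : ℕ) : G × Bool → ℤ :=
  fun p => if p.2 then 0 else ∑ i ∈ Finset.range n, (if p.1 = σ ^ i then 1 else 0)

/-- The circular flow `T : e → τ → τ² → ⋯ → τ^{m-1} → e`. -/
def flowT {G : Type*} [Group G] [DecidableEq G] (τ : G) (m : ℕ) : G × Bool → ℤ :=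
  fun p => if p.2 then ∑ j ∈ Finset.range m, (if p.1 = τ ^ j then 1 else 0) else 0

/-- The flow `A = (e → σ → στ) - (e → τ → τσ → ⋯ → τσ^r)`. -/
def flowA {G : Type*} [Group G] [DecidableEq G] (σ τ : G) (r : ℕ) : G × Bool → ℤ :=
  fun p =>
    if p.2 then (if p.1 = σ then 1 else 0) - (if p.1 = 1 then 1 else 0)
    else (if p.1 = 1 then 1 else 0)
      - ∑ i ∈ Finset.range r, (if p.1 = τ * σ ^ i then 1 else 0)

-- helper: sum over range n equals sum over ZMod n
lemma sum_range_eq_sum_zmod {M : Type*} [AddCommMonoid M] (n : ℕ) [NeZero n]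
    (g : ZMod n → M) : ∑ i ∈ Finset.range n, g i = ∑ k : ZMod n, g k := by
  refine Finset.sum_nbij' (fun i => (i : ZMod n)) (fun k => k.val) ?_ ?_ ?_ ?_ ?_
  · intro a _; exact Finset.mem_univ _
  · intro k _; exact Finset.mem_range.mpr (ZMod.val_lt k)
  · intro a ha; exact ZMod.val_cast_of_lt (Finset.mem_range.mp ha)
  · intro k _; exact ZMod.natCast_rightInverse k
  · intro a _; rfl

lemma key_bij {G : Type*} [Group G] [DecidableEq G] (σ : G) (x c : G) (n r j : ℕ)
    [NeZero n] (hn : orderOf σ = n) (hu : IsUnit (r : ZMod n)) :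
    ∑ i ∈ Finset.range n, (if x = c * σ ^ (r * i + j) then (1:ℤ) else 0)
      = ∑ i ∈ Finset.range n, (if x = c * σ ^ i then 1 else 0) := by
  have hσ : ∀ k : ℕ, σ ^ k = σ ^ (k % n) := fun k => by
    rw [← hn, pow_mod_orderOf]
  set f : ZMod n → ℤ := fun k => if x = c * σ ^ k.val then 1 else 0 with hf
  have h1 : ∀ k : ℕ, (if x = c * σ ^ k then (1:ℤ) else 0) = f (k : ZMod n) := by
    intro k
    simp only [hf, ZMod.val_natCast]
    rw [hσ k]
  have hLHS : ∑ i ∈ Finset.range n, (if x = c * σ ^ (r * i + j) then (1:ℤ) else 0)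
      = ∑ i ∈ Finset.range n, f ((r : ZMod n) * (i : ZMod n) + (j : ZMod n)) := by
    refine Finset.sum_congr rfl fun i _ => ?_
    rw [h1]; push_cast; ring_nf
  rw [hLHS, Finset.sum_congr rfl fun i (_ : i ∈ Finset.range n) => h1 i]
  rw [sum_range_eq_sum_zmod n (fun k => f ((r : ZMod n) * k + (j : ZMod n))),
      sum_range_eq_sum_zmod n f]
  have hbij : Function.Bijective (fun k : ZMod n => (r : ZMod n) * k + (j : ZMod n)) := by
    have h2 : Function.Bijective (fun k : ZMod n => (r : ZMod n) * k) := by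
      have := hu.unit.mulLeft_bijective
      simpa [IsUnit.unit_spec] using this
    exact (Equiv.addRight ((j : ZMod n))).bijective.comp h2
  exact Function.Bijective.sum_comp hbij f

/-- In the group `G = ⟨σ, τ | σⁿ = τ^m = e, τ⁻¹στ = σ^r⟩` with `gcd(n,m) = 1` and
`r^m ≡ 1 (mod n)`, the element `U_e = N_σ·Â - Ŝ + r·τŜ` lies in the kernel of the map
`π` sending `Ŝ, T̂, Â` to the flows `S, T, A` on `Cay(G, {σ, τ})`; equivalently, the
flow identity `N_σ(A) = S - r·τ(S)` holds, where `N_σ(A) = ∑_{i<n} σⁱ(A)` and a group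
element `g` acts on flows by `(g·f)(e) = f(g⁻¹·e)` (left translation of edges). -/
theorem norm_of_A_eq_S_sub_r_tau_S {G : Type*} [Group G] [DecidableEq G]
    (σ τ : G) (n m r : ℕ)
    (hn : orderOf σ = n) (hm : orderOf τ = m)
    (hcop : Nat.Coprime n m)
    (hrel : τ⁻¹ * σ * τ = σ ^ r)
    (hr : r ^ m ≡ 1 [MOD n]) :
    ∀ p : G × Bool,
      (∑ i ∈ Finset.range n, flowA σ τ r ((σ ^ i)⁻¹ * p.1, p.2))
        = flowS σ n p - r * flowS σ n (τ⁻¹ * p.1, p.2) := by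
  rintro ⟨x, b⟩
  rcases Nat.eq_zero_or_pos n with hn0 | hnpos
  · subst hn0
    simp [flowS, flowA]
  have : NeZero n := ⟨hnpos.ne'⟩
  -- σ^n = 1
  have hσn : σ ^ n = 1 := by rw [← hn]; exact pow_orderOf_eq_one σ
  -- IsUnit (r : ZMod n)
  have hu : IsUnit (r : ZMod n) := by
    rcases Nat.eq_zero_or_pos m with hm0 | hmpos
    · have hn1 : n = 1 := by simpa [hm0] using hcop
      subst hn1
      exact isUnit_of_subsingleton _
    · have : ((r : ZMod n)) ^ m = 1 := by
        have := (ZMod.natCast_eq_natCast_iff _ _ _).mpr hr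
        push_cast at this
        simpa using this
      exact IsUnit.of_pow_eq_one this hmpos.ne'
  -- στ relation: σ^i * τ = τ * σ^(r*i)
  have hcomm : ∀ i : ℕ, σ ^ i * τ = τ * σ ^ (r * i) := by
    intro i
    have h1 : τ⁻¹ * σ ^ i * τ = σ ^ (r * i) := by
      have h2 : τ⁻¹ * σ ^ i * τ = (τ⁻¹ * σ * τ⁻¹⁻¹) ^ i := by
        rw [conj_pow]; group
      rw [h2, inv_inv, hrel, ← pow_mul]
    calc σ ^ i * τ = τ * (τ⁻¹ * σ ^ i * τ) := by group
    _ = τ * σ ^ (r * i) := by rw [h1]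
  cases b
  · -- false case
    simp only [flowA, flowS, if_neg Bool.false_ne_true, Bool.false_eq_true, if_false]
    have step : ∀ i ∈ Finset.range n,
        ((if (σ ^ i)⁻¹ * x = 1 then (1:ℤ) else 0)
          - ∑ j ∈ Finset.range r, (if (σ ^ i)⁻¹ * x = τ * σ ^ j then 1 else 0))
        = (if x = σ ^ i then (1:ℤ) else 0)
          - ∑ j ∈ Finset.range r, (if x = τ * σ ^ (r * i + j) then 1 else 0) := by
      intro i _
      congr 1
      · refine if_congr ?_ rfl rfl
        rw [inv_mul_eq_one]; exact eq_comm
      · refine Finset.sum_congr rfl fun j _ => ?_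
        refine if_congr ?_ rfl rfl
        have h3 : σ ^ i * (τ * σ ^ j) = τ * σ ^ (r * i + j) := by
          rw [← mul_assoc, hcomm i, mul_assoc, ← pow_add]
        rw [inv_mul_eq_iff_eq_mul, h3]
    rw [Finset.sum_congr rfl step, Finset.sum_sub_distrib]
    have swap : ∑ i ∈ Finset.range n, ∑ j ∈ Finset.range r,
          (if x = τ * σ ^ (r * i + j) then (1:ℤ) else 0)
        = ∑ j ∈ Finset.range r, ∑ i ∈ Finset.range n,
          (if x = τ * σ ^ (r * i + j) then (1:ℤ) else 0) := Finset.sum_comm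
    rw [swap]
    have inner : ∀ j ∈ Finset.range r,
        ∑ i ∈ Finset.range n, (if x = τ * σ ^ (r * i + j) then (1:ℤ) else 0)
          = ∑ i ∈ Finset.range n, (if x = τ * σ ^ i then 1 else 0) :=
      fun j _ => key_bij σ x τ n r j hn hu
    rw [Finset.sum_congr rfl inner, Finset.sum_const, Finset.card_range]
    have : ∀ i : ℕ, (τ⁻¹ * x = σ ^ i) ↔ (x = τ * σ ^ i) := by
      intro i; rw [inv_mul_eq_iff_eq_mul]
    have hrw : ∑ i ∈ Finset.range n, (if τ⁻¹ * x = σ ^ i then (1:ℤ) else 0)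
        = ∑ i ∈ Finset.range n, (if x = τ * σ ^ i then 1 else 0) := by
      refine Finset.sum_congr rfl fun i _ => ?_
      simp only [this i]
    rw [hrw]
    push_cast
    ring
  · -- true case: telescoping
    simp only [flowA, flowS, if_pos rfl, if_true]
    have step : ∀ i ∈ Finset.range n,
        ((if (σ ^ i)⁻¹ * x = σ then (1:ℤ) else 0) - (if (σ ^ i)⁻¹ * x = 1 then 1 else 0))
        = (if x = σ ^ (i+1) then (1:ℤ) else 0) - (if x = σ ^ i then 1 else 0) := by
      intro i _
      congr 1
      · refine if_congr ?_ rfl rfl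
        rw [inv_mul_eq_iff_eq_mul, pow_succ]
      · refine if_congr ?_ rfl rfl
        rw [inv_mul_eq_one]; exact eq_comm
    rw [Finset.sum_congr rfl step, Finset.sum_range_sub (fun i => if x = σ ^ i then (1:ℤ) else 0)]
    simp [hσn]
end

section
/- Let H be a finite abelian group of exponent dividing m acting on a field K, with kernel H₀ = ker(H → Aut(K)), and suppose the fixed field K^H contains a primitive m-th root of unity. Let H act on K(x_h : h ∈ H) by permuting the variables via left translation and acting on K. For each character φ ∈ Hom(H, (K^H)^×) set x_φ = ∑_{h∈H} φ(h⁻¹) x_h. Then K(x_h : h ∈ H) = K(x_φ : φ ∈ H*) and g(x_φ) = φ(g)·x_φ for all g ∈ H. -/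
set_option maxHeartbeats 2000000
set_option synthInstance.maxHeartbeats 1000000


/-- The rational function field `K(x_h : h ∈ H)`. -/
abbrev VarField (K H : Type*) [Field K] : Type _ :=
  FractionRing (MvPolynomial H K)

/-- The embedding of the constants `K` into `K(x_h : h ∈ H)`. -/
noncomputable def constEmb (K H : Type*) [Field K] : K →+* VarField K H :=
  (algebraMap (MvPolynomial H K) (VarField K H)).comp
    (MvPolynomial.C : K →+* MvPolynomial H K)

/-- The indeterminate `x_h`. -/
noncomputable def Xvar (K : Type*) {H : Type*} [Field K] (h : H) : VarField K H :=
  algebraMap (MvPolynomial H K) (VarField K H) (MvPolynomial.X h)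

/-- The discrete Fourier transform `x_φ = ∑_{h ∈ H} φ(h⁻¹) x_h` of the variables with
respect to a character `φ`. -/
noncomputable def Xchar {K H : Type*} [Field K] [Group H] [Fintype H]
    (φ : H →* Kˣ) : VarField K H :=
  ∑ h : H, constEmb K H ↑(φ h⁻¹) * Xvar K h

/-- Fourier analysis of the permutation action on variables: if a finite abelian group
`H` of exponent dividing `m` acts on `K` and on `K(x_h : h ∈ H)` by `g(x_h) = x_{gh}`,
and `K^H` contains a primitive `m`-th root of unity, then
`K(x_h : h ∈ H) = K(x_φ : φ ∈ H^*)` where `H^* = Hom(H, (K^H)^×)`, and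
`g(x_φ) = φ(g)·x_φ` for every character `φ` and every `g ∈ H`. -/
theorem fourier_transform_of_variables {H K : Type*} [CommGroup H] [Fintype H]
    [Field K] [MulSemiringAction H K]
    (m : ℕ) (hm : 0 < m) (hexp : Monoid.exponent H ∣ m)
    (ζ : K) (hζ : IsPrimitiveRoot ζ m) (hζfix : ∀ g : H, g • ζ = ζ)
    (σ : H →* (VarField K H ≃+* VarField K H))
    (hσC : ∀ (g : H) (c : K), σ g (constEmb K H c) = constEmb K H (g • c))
    (hσX : ∀ g h : H, σ g (Xvar K h) = Xvar K (g * h)) :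
    (Subfield.closure (Set.range (constEmb K H) ∪
        {x | ∃ φ : H →* Kˣ, (∀ g h : H, g • ((φ h : Kˣ) : K) = ((φ h : Kˣ) : K))
          ∧ x = Xchar φ}) = ⊤) ∧
    ∀ φ : H →* Kˣ, (∀ g h : H, g • ((φ h : Kˣ) : K) = ((φ h : Kˣ) : K)) →
      ∀ g : H, σ g (Xchar φ) = constEmb K H ↑(φ g) * Xchar φ := by
  classical
  haveI : NeZero m := ⟨hm.ne'⟩
  -- all character values are powers of ζ, hence fixed by the action of H on K
  have hfix : ∀ (φ : H →* Kˣ) (g h : H), g • ((φ h : Kˣ) : K) = ((φ h : Kˣ) : K) := by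
    intro φ g h
    have hhm : h ^ m = 1 :=
      orderOf_dvd_iff_pow_eq_one.mp ((Monoid.order_dvd_exponent h).trans hexp)
    have hpow : ((φ h : Kˣ) : K) ^ m = 1 := by
      rw [← Units.val_pow_eq_pow_val, ← map_pow, hhm, map_one, Units.val_one]
    obtain ⟨i, _, hi⟩ := hζ.eq_pow_of_pow_eq_one hpow
    rw [← hi, smul_pow', hζfix]
  haveI hK : HasEnoughRootsOfUnity K m := ⟨⟨ζ, hζ⟩, inferInstance⟩
  haveI : HasEnoughRootsOfUnity K (Monoid.exponent H) := HasEnoughRootsOfUnity.of_dvd K hexp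
  obtain ⟨e⟩ := CommGroup.monoidHom_mulEquiv_of_hasEnoughRootsOfUnity H K
  haveI : Finite (H →* Kˣ) := Finite.of_equiv H e.toEquiv.symm
  haveI : Fintype (H →* Kˣ) := Fintype.ofFinite _
  have hcardD : Fintype.card (H →* Kˣ) = Fintype.card H := Fintype.card_congr e.toEquiv
  -- orthogonality of characters
  have horth : ∀ a : H, a ≠ 1 → ∑ φ : H →* Kˣ, ((φ a : Kˣ) : K) = 0 := by
    intro a ha
    obtain ⟨ψ, hψ⟩ := CommGroup.exists_apply_ne_one_of_hasEnoughRootsOfUnity H K ha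
    let f : (H →* Kˣ) →* K :=
      { toFun := fun φ => ((φ a : Kˣ) : K)
        map_one' := by simp
        map_mul' := fun φ χ => by simp }
    have hf : f ≠ 1 := by
      intro h
      apply hψ
      have h1 : f ψ = 1 := by rw [h]; rfl
      exact Units.val_eq_one.mp h1
    exact sum_hom_units_eq_zero f hf
  have hsum : ∀ a : H, ∑ φ : H →* Kˣ, ((φ a : Kˣ) : K) =
      if a = 1 then (Fintype.card H : K) else 0 := by
    intro a
    split_ifs with ha
    · subst ha
      simp only [map_one, Units.val_one, Finset.sum_const, Finset.card_univ,
        nsmul_eq_mul, mul_one, hcardD]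
    · exact horth a ha
  -- `(card H : K) ≠ 0`
  have hm0 : (m : K) ≠ 0 := (hζ.neZero').out
  have hcard0 : ((Fintype.card H : K)) ≠ 0 := by
    intro h0
    rcases CharP.char_is_prime_or_zero K (ringChar K) with hp | hp
    · haveI : Fact (ringChar K).Prime := ⟨hp⟩
      have hdvd : ringChar K ∣ Fintype.card H := (ringChar.spec K _).mp h0
      obtain ⟨g, hg⟩ := exists_prime_orderOf_dvd_card (ringChar K) hdvd
      have hdm : ringChar K ∣ m := (hg ▸ Monoid.order_dvd_exponent g).trans hexp
      exact hm0 ((ringChar.spec K m).mpr hdm)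
    · have h2 := (ringChar.spec K _).mp h0
      rw [hp] at h2
      exact Fintype.card_pos.ne' (zero_dvd_iff.mp h2)
  set S : Set (VarField K H) := Set.range (constEmb K H) ∪
      {x | ∃ φ : H →* Kˣ, (∀ g h : H, g • ((φ h : Kˣ) : K) = ((φ h : Kˣ) : K))
        ∧ x = Xchar φ} with hS
  set F : Subfield (VarField K H) := Subfield.closure S with hF
  have hXchar_mem : ∀ φ : H →* Kˣ, Xchar (K := K) φ ∈ F :=
    fun φ => Subfield.subset_closure (Or.inr ⟨φ, fun g h => hfix φ g h, rfl⟩)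
  have hC_mem : ∀ c : K, constEmb K H c ∈ F :=
    fun c => Subfield.subset_closure (Or.inl ⟨c, rfl⟩)
  -- the inverse Fourier transform
  have hkey : ∀ h : H, ∑ φ : H →* Kˣ, constEmb K H ((φ h : Kˣ) : K) * Xchar φ
      = constEmb K H (Fintype.card H : K) * Xvar K h := by
    intro h
    simp only [Xchar, Finset.mul_sum]
    rw [Finset.sum_comm]
    have hinner : ∀ k : H,
        ∑ φ : H →* Kˣ, constEmb K H ((φ h : Kˣ) : K) *
          (constEmb K H ((φ k⁻¹ : Kˣ) : K) * Xvar K k)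
        = constEmb K H (if h * k⁻¹ = 1 then (Fintype.card H : K) else 0) * Xvar K k := by
      intro k
      rw [← hsum (h * k⁻¹), map_sum, Finset.sum_mul]
      refine Finset.sum_congr rfl fun φ _ => ?_
      rw [← mul_assoc, ← map_mul, ← Units.val_mul, ← map_mul]
    calc ∑ k : H, ∑ φ : H →* Kˣ, constEmb K H ((φ h : Kˣ) : K) *
          (constEmb K H ((φ k⁻¹ : Kˣ) : K) * Xvar K k)
        = ∑ k : H, constEmb K H (if h * k⁻¹ = 1 then (Fintype.card H : K) else 0) * Xvar K k :=
          Finset.sum_congr rfl fun k _ => hinner k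
      _ = constEmb K H (Fintype.card H : K) * Xvar K h := by
          rw [Finset.sum_eq_single h]
          · simp
          · intro k _ hk
            have hne : h * k⁻¹ ≠ 1 := by
              simpa [mul_inv_eq_one] using (hk.symm : ¬ h = k)
            simp [hne]
          · simp
  have hXvar_mem : ∀ h : H, Xvar K h ∈ F := by
    intro h
    have hsum_mem : (∑ φ : H →* Kˣ, constEmb K H ((φ h : Kˣ) : K) * Xchar φ) ∈ F :=
      Subfield.sum_mem _ fun φ _ => Subfield.mul_mem _ (hC_mem _) (hXchar_mem φ)
    rw [hkey h] at hsum_mem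
    have hmem := Subfield.mul_mem _ (hC_mem ((Fintype.card H : K)⁻¹)) hsum_mem
    rwa [← mul_assoc, ← map_mul, inv_mul_cancel₀ hcard0, map_one, one_mul] at hmem
  have hpoly : ∀ p : MvPolynomial H K, algebraMap (MvPolynomial H K) (VarField K H) p ∈ F := by
    intro p
    induction p using MvPolynomial.induction_on with
    | C c => exact hC_mem c
    | add p q hp hq => rw [map_add]; exact Subfield.add_mem _ hp hq
    | mul_X p h hp => rw [map_mul]; exact Subfield.mul_mem _ hp (hXvar_mem h)
  constructor
  · rw [eq_top_iff]
    rintro x -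
    obtain ⟨p, q, hq, hx⟩ := IsFractionRing.div_surjective (A := MvPolynomial H K) x
    rw [← hx]
    exact Subfield.div_mem _ (hpoly p) (hpoly q)
  · intro φ hφ g
    calc σ g (Xchar φ)
        = ∑ h : H, constEmb K H ((φ h⁻¹ : Kˣ) : K) * Xvar K (g * h) := by
          rw [Xchar, map_sum]
          refine Finset.sum_congr rfl fun h _ => ?_
          rw [map_mul, hσC, hσX, hφ]
      _ = ∑ h : H, constEmb K H ((φ g : Kˣ) : K) *
            (constEmb K H ((φ h⁻¹ : Kˣ) : K) * Xvar K h) := by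
          refine Fintype.sum_equiv (Equiv.mulLeft g) _ _ fun h => ?_
          rw [← mul_assoc, ← map_mul, ← Units.val_mul, ← map_mul]
          have harg : g * ((Equiv.mulLeft g) h)⁻¹ = h⁻¹ := by
            simp only [Equiv.coe_mulLeft]
            rw [mul_inv_rev, mul_comm h⁻¹ g⁻¹, mul_inv_cancel_left]
          rw [harg]
          simp only [Equiv.coe_mulLeft]
      _ = constEmb K H ((φ g : Kˣ) : K) * Xchar φ := by rw [← Finset.mul_sum, Xchar]
end
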